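/- Suppose P_L e_i = 1 and θ e_i ≤ 2 for every entry e_i of e, and suppose there is a set U of indices (the uncertain events) with κ_u e_i ≤ 1 for every i ∈ U. Let m₂ be the cardinality of U, m₁ = m − m₂, and c the sum of P_M f_j over all entries f_j of f. Then there exist an index set I (namely the complement of U) and an alignment γ of the corresponding realization with f such that 𝔎(I, γ) ≤ 3·m₁ + m₂ + c; in particular δ' m n ≤ 3·m₁ + m₂ + c. -/

import Mathlib

open scoped ENNReal

namespace Stmt3

variable {E F : Type*}

/-- The log projection of a list of moves: first components that are not `none`. -/
def logProj (γ : List (Option E × Option F)) : List E := γ.filterMap Prod.fst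

/-- The model projection of a list of moves: second components that are not `none`. -/
def modelProj (γ : List (Option E × Option F)) : List F := γ.filterMap Prod.snd

/-- `γ` is an alignment of `e` and `f`: a list of moves (no `(none, none)` pairs)
whose log projection is `e` and whose model projection is `f`. -/
def IsAlignment (e : List E) (f : List F) (γ : List (Option E × Option F)) : Prop :=
  (∀ mv ∈ γ, mv ≠ (none, none)) ∧ logProj γ = e ∧ modelProj γ = f

/-- Combined cost of a log move: `θ a` if `P_L a = 0`, else `P_L a * (1 + θ a)`. -/
noncomputable def lg (PL θ : E → ℝ≥0∞) (a : E) : ℝ≥0∞ :=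
  if PL a = 0 then θ a else PL a * (1 + θ a)

/-- Combined cost of a synchronous move: `θ a` if `P₌ a b = 0`, else `P₌ a b * (1 + θ a)`. -/
noncomputable def sync (Peq : E → F → ℝ≥0∞) (θ : E → ℝ≥0∞) (a : E) (b : F) : ℝ≥0∞ :=
  if Peq a b = 0 then θ a else Peq a b * (1 + θ a)

/-- Combined cost of a single move. -/
noncomputable def cMoveCost (PL : E → ℝ≥0∞) (PM : F → ℝ≥0∞) (Peq : E → F → ℝ≥0∞)
    (θ : E → ℝ≥0∞) : Option E × Option F → ℝ≥0∞
  | (some a, none) => lg PL θ a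
  | (none, some b) => PM b
  | (some a, some b) => sync Peq θ a b
  | (none, none) => 0

/-- The realization of `e` determined by the index set `I`: the order-preserving
selection of the entries of `e` at the indices in `I`. -/
def select (e : List E) (I : Finset (Fin e.length)) : List E :=
  ((List.finRange e.length).filter (fun i => i ∈ I)).map e.get

/-- Total cost `𝔎(I, γ)`: sum of the combined move costs of the moves of `γ` plus the
removal cost of the realization, i.e. the sum of `κ_u e_i` over non-selected indices. -/
noncomputable def totalCost (PL : E → ℝ≥0∞) (PM : F → ℝ≥0∞) (Peq : E → F → ℝ≥0∞)
    (θ κu : E → ℝ≥0∞) (e : List E) (I : Finset (Fin e.length))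
    (γ : List (Option E × Option F)) : ℝ≥0∞ :=
  (γ.map (cMoveCost PL PM Peq θ)).sum + ∑ i ∈ Iᶜ, κu (e.get i)

private lemma length_filter_finRange {n : ℕ} (p : Fin n → Prop) [DecidablePred p] :
    ((List.finRange n).filter (fun i => p i)).length = (Finset.univ.filter p).card := by
  rw [Fin.univ_def]; rfl

/-- If `P_L e_i = 1` and `θ e_i ≤ 2` for every entry of `e`, and `U` is a set of indices
(the uncertain events) with `κ_u e_i ≤ 1` for `i ∈ U`, then with `m₂ = |U|`,
`m₁ = m − m₂` and `c` the sum of `P_M` over `f`, there exist an index set `I`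
(namely `Uᶜ`) and an alignment `γ` of the corresponding realization with `f` such that
`𝔎(I, γ) ≤ 3·m₁ + m₂ + c`; in particular `δ' m n ≤ 3·m₁ + m₂ + c`. -/
theorem cost_upper_bound
    (PL : E → ℝ≥0∞) (PM : F → ℝ≥0∞) (Peq : E → F → ℝ≥0∞) (θ κu : E → ℝ≥0∞)
    (e : List E) (f : List F)
    (hPL : ∀ i : Fin e.length, PL (e.get i) = 1)
    (hθ : ∀ i : Fin e.length, θ (e.get i) ≤ 2)
    (U : Finset (Fin e.length))
    (hU : ∀ i ∈ U, κu (e.get i) ≤ 1)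
    (m₁ m₂ : ℕ) (hm₂ : m₂ = U.card) (hm₁ : m₁ = e.length - m₂)
    (c : ℝ≥0∞) (hc : c = (f.map PM).sum)
    (δ' : ℕ → ℕ → ℝ≥0∞)
    (h00 : δ' 0 0 = 0)
    (hi0 : ∀ i (hi : i < e.length),
      δ' (i + 1) 0 = min (lg PL θ (e[i]'hi)) (κu (e[i]'hi)) + δ' i 0)
    (h0j : ∀ j (hj : j < f.length), δ' 0 (j + 1) = PM (f[j]'hj) + δ' 0 j)
    (hij : ∀ i j (hi : i < e.length) (hj : j < f.length),
      δ' (i + 1) (j + 1) =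
        min (sync Peq θ (e[i]'hi) (f[j]'hj) + δ' i j)
          (min (lg PL θ (e[i]'hi) + δ' i (j + 1))
            (min (κu (e[i]'hi) + δ' i (j + 1)) (PM (f[j]'hj) + δ' (i + 1) j)))) :
    (∃ γ : List (Option E × Option F),
      IsAlignment (select e Uᶜ) f γ ∧
        totalCost PL PM Peq θ κu e Uᶜ γ ≤ 3 * (m₁ : ℝ≥0∞) + (m₂ : ℝ≥0∞) + c) ∧
    δ' e.length f.length ≤ 3 * (m₁ : ℝ≥0∞) + (m₂ : ℝ≥0∞) + c := by
  subst hm₂ hm₁ hc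
  have hlg : ∀ i : Fin e.length, lg PL θ (e.get i) ≤ 3 := by
    intro i
    rw [lg, if_neg (by rw [hPL i]; exact one_ne_zero), hPL i, one_mul]
    calc 1 + θ (e.get i) ≤ 1 + 2 := add_le_add le_rfl (hθ i)
      _ = 3 := by norm_num
  have hcardc : (Uᶜ).card = e.length - U.card := by
    rw [Finset.card_compl, Fintype.card_fin]
  constructor
  · refine ⟨(select e Uᶜ).map (fun a => ((some a : Option E), (none : Option F))) ++
      f.map (fun b => ((none : Option E), (some b : Option F))), ⟨?_, ?_, ?_⟩, ?_⟩
    · intro mv hmv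
      rcases List.mem_append.1 hmv with h | h <;>
        · obtain ⟨x, -, rfl⟩ := List.mem_map.1 h; simp
    · simp [logProj, List.filterMap_append, List.filterMap_map, Function.comp_def]
    · simp [modelProj, List.filterMap_append, List.filterMap_map, Function.comp_def]
    · rw [totalCost, List.map_append, List.sum_append, List.map_map, List.map_map,
        compl_compl]
      have h1 : ((select e Uᶜ).map (cMoveCost PL PM Peq θ ∘
          fun a => ((some a : Option E), (none : Option F)))).sum ≤
          3 * ((e.length - U.card : ℕ) : ℝ≥0∞) := by
        have hlen : (select e Uᶜ).length = (Uᶜ).card := by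
          rw [select, List.length_map, length_filter_finRange]
          congr 1
          ext i; simp
        calc ((select e Uᶜ).map (cMoveCost PL PM Peq θ ∘
              fun a => ((some a : Option E), (none : Option F)))).sum
            ≤ ((select e Uᶜ).map (cMoveCost PL PM Peq θ ∘
              fun a => ((some a : Option E), (none : Option F)))).length • (3 : ℝ≥0∞) := by
              apply List.sum_le_card_nsmul
              intro x hx
              obtain ⟨a, ha, rfl⟩ := List.mem_map.1 hx
              obtain ⟨i, -, rfl⟩ := List.mem_map.1 ha
              exact hlg i
          _ = 3 * ((e.length - U.card : ℕ) : ℝ≥0∞) := by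
              rw [List.length_map, hlen, hcardc, nsmul_eq_mul, mul_comm]
      have h2 : (f.map (cMoveCost PL PM Peq θ ∘
          fun b => ((none : Option E), (some b : Option F)))).sum = (f.map PM).sum := by
        congr 1
      have h3 : ∑ i ∈ U, κu (e.get i) ≤ (U.card : ℝ≥0∞) := by
        calc ∑ i ∈ U, κu (e.get i) ≤ U.card • (1 : ℝ≥0∞) :=
            Finset.sum_le_card_nsmul _ _ _ (fun i hi => hU i hi)
          _ = (U.card : ℝ≥0∞) := by rw [nsmul_eq_mul, mul_one]
      calc ((select e Uᶜ).map _).sum + (f.map _).sum + ∑ i ∈ U, κu (e.get i)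
          ≤ 3 * ((e.length - U.card : ℕ) : ℝ≥0∞) + (f.map PM).sum + (U.card : ℝ≥0∞) :=
            add_le_add (add_le_add h1 h2.le) h3
        _ = 3 * ((e.length - U.card : ℕ) : ℝ≥0∞) + (U.card : ℝ≥0∞) + (f.map PM).sum := by
            ring
  · have key : ∀ j, j ≤ f.length → ∀ i (hi : i < e.length),
        δ' (i + 1) j ≤ min (lg PL θ (e[i]'hi)) (κu (e[i]'hi)) + δ' i j := by
      intro j hj i hi
      match j with
      | 0 => exact (hi0 i hi).le
      | (j' + 1) =>
        rw [hij i j' hi (by omega), ← min_add_add_right]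
        exact le_min ((min_le_right _ _).trans (min_le_left _ _))
          ((min_le_right _ _).trans ((min_le_right _ _).trans (min_le_left _ _)))
    have h0 : ∀ j, j ≤ f.length → δ' 0 j = ((f.take j).map PM).sum := by
      intro j
      induction j with
      | zero => simp [h00]
      | succ j ih =>
        intro hj
        have hjlt : j < f.length := by omega
        rw [h0j j hjlt, ih (by omega), List.take_succ, List.map_append, List.sum_append,
          List.getElem?_eq_getElem hjlt]
        simp [add_comm]
    set g : ℕ → ℝ≥0∞ := fun k =>
      if h : k < e.length then min (lg PL θ (e[k]'h)) (κu (e[k]'h)) else 0 with hg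
    have hgval : ∀ i : Fin e.length, g ↑i = min (lg PL θ (e.get i)) (κu (e.get i)) := by
      intro i
      simp only [hg, dif_pos i.isLt, List.get_eq_getElem]
    have main : ∀ i, i ≤ e.length →
        δ' i f.length ≤ (∑ k ∈ Finset.range i, g k) + δ' 0 f.length := by
      intro i
      induction i with
      | zero => simp
      | succ i ih =>
        intro hi
        have hilt : i < e.length := by omega
        calc δ' (i + 1) f.length
            ≤ min (lg PL θ (e[i]'hilt)) (κu (e[i]'hilt)) + δ' i f.length :=
              key f.length le_rfl i hilt
          _ ≤ min (lg PL θ (e[i]'hilt)) (κu (e[i]'hilt)) +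
              ((∑ k ∈ Finset.range i, g k) + δ' 0 f.length) := by
              gcongr
              exact ih (by omega)
          _ = (∑ k ∈ Finset.range (i + 1), g k) + δ' 0 f.length := by
              rw [Finset.sum_range_succ, hgval ⟨i, hilt⟩]
              simp only [List.get_eq_getElem]
              ring
    have hsum : ∑ k ∈ Finset.range e.length, g k ≤
        3 * ((e.length - U.card : ℕ) : ℝ≥0∞) + (U.card : ℝ≥0∞) := by
      rw [← Fin.sum_univ_eq_sum_range]
      rw [← Finset.sum_add_sum_compl U (fun i : Fin e.length => g ↑i)]
      have hA : ∑ i ∈ U, g ↑i ≤ (U.card : ℝ≥0∞) := by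
        calc ∑ i ∈ U, g ↑i ≤ U.card • (1 : ℝ≥0∞) := by
              apply Finset.sum_le_card_nsmul
              intro i hi
              rw [hgval i]
              exact (min_le_right _ _).trans (hU i hi)
          _ = (U.card : ℝ≥0∞) := by rw [nsmul_eq_mul, mul_one]
      have hB : ∑ i ∈ Uᶜ, g ↑i ≤ 3 * ((e.length - U.card : ℕ) : ℝ≥0∞) := by
        calc ∑ i ∈ Uᶜ, g ↑i ≤ (Uᶜ).card • (3 : ℝ≥0∞) := by
              apply Finset.sum_le_card_nsmul
              intro i _
              rw [hgval i]
              exact (min_le_left _ _).trans (hlg i)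
          _ = 3 * ((e.length - U.card : ℕ) : ℝ≥0∞) := by
              rw [hcardc, nsmul_eq_mul, mul_comm]
      calc ∑ i ∈ U, g ↑i + ∑ i ∈ Uᶜ, g ↑i
          ≤ (U.card : ℝ≥0∞) + 3 * ((e.length - U.card : ℕ) : ℝ≥0∞) := add_le_add hA hB
        _ = _ := by ring
    have hfin : δ' 0 f.length = (f.map PM).sum := by
      rw [h0 f.length le_rfl, List.take_length]
    calc δ' e.length f.length
        ≤ (∑ k ∈ Finset.range e.length, g k) + δ' 0 f.length := main e.length le_rfl
      _ ≤ (3 * ((e.length - U.card : ℕ) : ℝ≥0∞) + (U.card : ℝ≥0∞)) + (f.map PM).sum :=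
          add_le_add hsum hfin.le
      _ = _ := by rw [add_assoc]

end Stmt3
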